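/- Let k be odd, ℓ ≥ 1, and a₁,…,a_k ∈ F_q \ {0}. Then the equation L'(x₁,…,x_{k+ℓ}) = a₁x₁+⋯+a_kx_k + 0·x_{k+1}+⋯+0·x_{k+ℓ} = 0 is not common: there exists f : F_q → [0,1] with Λ_{L'=0}(f) + Λ_{L'=0}(1−f) < 2^{1−k−ℓ}, where Λ_{L'=0}(g) = (E g)^ℓ · Λ_{L=0}(g). -/
import Mathlib
open Finset

lemma aux_diff_le (a b : ℝ) (hb : 0 ≤ b) (hba : b ≤ a) (ha : a ≤ 1) :
    ∀ n : ℕ, a^n - b^n ≤ n*(a-b) := by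
  intro n
  induction n with
  | zero => simp
  | succ n ih =>
    have hbn : b^n ≤ a^n := pow_le_pow_left₀ hb hba n
    have han : a^n ≤ 1 := pow_le_one₀ (hb.trans hba) ha
    have hb0 : 0 ≤ b^n := pow_nonneg hb n
    push_cast
    rw [pow_succ, pow_succ]
    nlinarith [mul_nonneg (sub_nonneg.2 ha) (sub_nonneg.2 hbn),
      mul_nonneg (sub_nonneg.2 hba) (sub_nonneg.2 (hbn.trans han : b^n ≤ 1))]

lemma aux_Pb (c : ℝ) (h0 : 0 ≤ c) (h2 : c ≤ 1/2) :
    ∀ n : ℕ, (1/2+c)^n + (1/2-c)^n ≤ 2*(1/2:ℝ)^n + 4*n*c^2 := by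
  intro n
  induction n with
  | zero => norm_num
  | succ n ih =>
    have hd := aux_diff_le (1/2+c) (1/2-c) (by linarith) (by linarith) (by linarith) n
    have hd' := mul_le_mul_of_nonneg_left hd h0
    push_cast
    rw [pow_succ, pow_succ, pow_succ]
    nlinarith [ih, hd', sq_nonneg c]

lemma aux_low (c : ℝ) (h0 : 0 ≤ c) (h2 : c ≤ 1/4) :
    ∀ m : ℕ, 2*c*(1/4:ℝ)^m ≤ (1/2+c)^(m+1) - (1/2-c)^(m+1) := by
  intro m
  induction m with
  | zero => norm_num; linarith
  | succ m ih =>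
    have hvp : (0:ℝ) ≤ (1/2-c)^(m+1) := pow_nonneg (by linarith) _
    have h2' : (0:ℝ) ≤ 2*c*(1/2-c)^(m+1) := mul_nonneg (by linarith) hvp
    have hnn : (0:ℝ) ≤ 2*c*(1/4)^m := mul_nonneg (by linarith) (by positivity)
    have h1 : (1/4:ℝ)*(2*c*(1/4)^m) ≤ (1/2+c)*((1/2+c)^(m+1) - (1/2-c)^(m+1)) :=
      mul_le_mul (by linarith) ih hnn (by linarith)
    rw [pow_succ (1/2+c:ℝ) (m+1), pow_succ (1/2-c:ℝ) (m+1), pow_succ (1/4:ℝ) m]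
    nlinarith [h1, h2']

lemma aux_key {F : Type} [Field F] [Fintype F] [DecidableEq F] (α γ : ℝ) :
    ∀ (k : ℕ) (a : Fin k → F), (∀ i, a i ≠ 0) →
    (Fintype.card F : ℝ) *
      ∑ x ∈ Finset.univ.filter (fun x : Fin k → F => ∑ i, a i * x i = 0),
        ∏ i, (α + γ * if x i = 0 then 1 else 0)
    = ((Fintype.card F : ℝ) * α + γ) ^ k + γ ^ k * ((Fintype.card F : ℝ) - 1) := by
  have hq : (0:ℝ) < (Fintype.card F : ℝ) := by
    exact_mod_cast Fintype.card_pos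
  intro k
  induction k with
  | zero =>
    intro a ha
    simp [Finset.filter_true_of_mem]
  | succ k ih =>
    intro a ha
    set q : ℝ := (Fintype.card F : ℝ)
    have ha0 : a 0 ≠ 0 := ha 0
    set t : (Fin k → F) → F := fun y => -(a 0)⁻¹ * ∑ i, a i.succ * y i with ht
    have step1 :
        ∑ x ∈ Finset.univ.filter (fun x : Fin (k+1) → F => ∑ i, a i * x i = 0),
          ∏ i, (α + γ * if x i = 0 then 1 else 0)
        = ∑ y : Fin k → F,
            (α + γ * if t y = 0 then 1 else 0) * ∏ i, (α + γ * if y i = 0 then 1 else 0) := by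
      rw [Finset.sum_filter]
      rw [← Fintype.sum_equiv (Fin.consEquiv (fun _ : Fin (k+1) => F))
        (fun p : F × (Fin k → F) =>
          if (∑ i, a i * (Fin.cons p.1 p.2 : Fin (k+1) → F) i) = 0 then
            ∏ i, (α + γ * if (Fin.cons p.1 p.2 : Fin (k+1) → F) i = 0 then 1 else 0) else 0)
        _ (fun p => rfl)]
      rw [Fintype.sum_prod_type, Finset.sum_comm]
      refine Finset.sum_congr rfl fun y _ => ?_
      have hcond : ∀ x0 : F, ((∑ i, a i * (Fin.cons x0 y : Fin (k+1) → F) i) = 0) = (x0 = t y) := by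
        intro x0
        simp only [Fin.sum_univ_succ, Fin.cons_zero, Fin.cons_succ, ht]
        rw [eq_iff_iff]
        constructor
        · intro h
          field_simp
          linear_combination h
        · intro h
          subst h
          field_simp
          ring
      simp only [hcond]
      rw [show (∑ x0 : F, if x0 = t y then
            ∏ i, (α + γ * if (Fin.cons x0 y : Fin (k+1) → F) i = 0 then 1 else 0) else 0)
          = ∏ i, (α + γ * if (Fin.cons (t y) y : Fin (k+1) → F) i = 0 then 1 else 0) by
        rw [Finset.sum_ite_eq' Finset.univ (t y)]
        simp]
      rw [Fin.prod_univ_succ]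
      simp [Fin.cons_zero, Fin.cons_succ]
    rw [step1]
    have hsplit :
        ∑ y : Fin k → F,
            (α + γ * if t y = 0 then 1 else 0) * ∏ i, (α + γ * if y i = 0 then 1 else 0)
        = α * ∑ y : Fin k → F, ∏ i, (α + γ * if y i = 0 then 1 else 0)
          + γ * ∑ y ∈ Finset.univ.filter (fun y : Fin k → F => ∑ i, a i.succ * y i = 0),
              ∏ i, (α + γ * if y i = 0 then 1 else 0) := by
      rw [Finset.sum_filter, Finset.mul_sum, Finset.mul_sum, ← Finset.sum_add_distrib]
      refine Finset.sum_congr rfl fun y _ => ?_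
      have hiff : t y = 0 ↔ (∑ i, a i.succ * y i) = 0 := by simp [ht, ha0]
      by_cases h : (∑ i, a i.succ * y i) = 0
      · rw [if_pos (hiff.mpr h), if_pos h]; ring
      · rw [if_neg (fun hh => h (hiff.mp hh)), if_neg h]; ring
    rw [hsplit]
    have hfull : ∑ y : Fin k → F, ∏ i, (α + γ * if y i = 0 then 1 else 0)
        = (q * α + γ) ^ k := by
      rw [← Fintype.piFinset_univ,
        ← prod_univ_sum (fun _ : Fin k => (Finset.univ : Finset F))
        (fun _ x => α + γ * if x = 0 then 1 else 0)]
      have hx : (∑ x : F, (α + γ * if x = 0 then 1 else 0)) = q * α + γ := by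
        rw [Finset.sum_add_distrib]
        rw [← Finset.mul_sum]
        simp [Finset.sum_ite_eq' Finset.univ (0:F), q, mul_comm]
      rw [Finset.prod_congr rfl fun i _ => hx]
      simp
    have hih := ih (fun i => a i.succ) (fun i => ha i.succ)
    rw [hfull]
    linear_combination γ * hih

set_option maxHeartbeats 1000000 in
theorem stmt_12 {F : Type} [Field F] [Fintype F] [DecidableEq F]
    (k ℓ : ℕ) (hk : Odd k) (hℓ : 1 ≤ ℓ) (a : Fin k → F) (ha : ∀ i, a i ≠ 0) :
    ∃ f : F → ℝ, (∀ x, f x ∈ Set.Icc (0 : ℝ) 1)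
      ∧ ((∑ x, f x) / (Fintype.card F : ℝ)) ^ ℓ *
          ((∑ x ∈ Finset.univ.filter
              (fun x : Fin k → F => ∑ i, a i * x i = 0), ∏ i, f (x i)) /
            ((Finset.univ.filter (fun x : Fin k → F => ∑ i, a i * x i = 0)).card : ℝ))
        + ((∑ x, (1 - f x)) / (Fintype.card F : ℝ)) ^ ℓ *
          ((∑ x ∈ Finset.univ.filter
              (fun x : Fin k → F => ∑ i, a i * x i = 0), ∏ i, (1 - f (x i))) /
            ((Finset.univ.filter (fun x : Fin k → F => ∑ i, a i * x i = 0)).card : ℝ))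
        < (2 : ℝ) ^ ((1 : ℤ) - k - ℓ) := by
  obtain ⟨m, rfl⟩ : ∃ m, ℓ = m + 1 := ⟨ℓ - 1, (Nat.succ_pred_eq_of_pos hℓ).symm⟩
  have hk1 : 1 ≤ k := hk.pos
  have hknz : k ≠ 0 := by omega
  obtain ⟨q, hqdef⟩ : ∃ q : ℝ, q = (Fintype.card F : ℝ) := ⟨_, rfl⟩
  have hq2 : (2:ℝ) ≤ q := by
    have := Fintype.one_lt_card (α := F)
    rw [hqdef]; exact_mod_cast this
  have hq0 : (0:ℝ) < q := by linarith
  obtain ⟨ε, hεdef⟩ : ∃ ε : ℝ, ε = (q - 1) / (2*q)^k := ⟨_, rfl⟩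
  have hε : 0 < ε := hεdef ▸ div_pos (by linarith) (by positivity)
  have hε1 : ε ≤ 1 := by
    rw [hεdef, div_le_one (by positivity)]
    have h1 : (2*q) ≤ (2*q)^k := le_self_pow₀ (by linarith) hknz
    linarith
  obtain ⟨K, hKdef⟩ : ∃ K : ℝ, K = (k:ℝ) + m + 1 := ⟨_, rfl⟩
  have hK : (0:ℝ) < K := by rw [hKdef]; positivity
  obtain ⟨c, hcdef⟩ : ∃ c : ℝ, c = ε / (K * 4^m * 16) := ⟨_, rfl⟩
  have hKD : (0:ℝ) < K * 4^m * 16 := by positivity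
  have hc0 : 0 < c := hcdef ▸ div_pos hε hKD
  have hcs : c * (K * 4^m * 16) = ε := by rw [hcdef]; exact div_mul_cancel₀ _ hKD.ne'
  have hc14 : c ≤ 1/4 := by
    have hD : (16:ℝ) ≤ K * 4^m * 16 := by
      have h1 : (1:ℝ) ≤ K := by
        rw [hKdef]
        have : (0:ℝ) ≤ (k:ℝ) + m := by positivity
        linarith
      have h2 : (1:ℝ) ≤ 4^m := one_le_pow₀ (by norm_num)
      nlinarith
    have h3 : c ≤ ε / 16 := by
      rw [hcdef]
      exact div_le_div_of_nonneg_left hε.le (by norm_num) hD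
    linarith
  have h2q : 1/(2*q) ≤ 1/4 := by
    rw [div_le_div_iff₀ (by linarith) (by norm_num)]
    linarith
  have h2q0 : 0 < 1/(2*q) := by positivity
  obtain ⟨S, hS⟩ : ∃ S : Finset (Fin k → F),
      S = Finset.univ.filter (fun x : Fin k → F => ∑ i, a i * x i = 0) := ⟨_, rfl⟩
  rw [← hqdef, ← hS]
  refine ⟨fun x => (1/2 + c + 1/(2*q)) + (-(1/2:ℝ)) * (if x = 0 then 1 else 0),
    fun x => ?_, ?_⟩
  · simp only [Set.mem_Icc]
    split_ifs <;> constructor <;> nlinarith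
  beta_reduce
  -- key applications
  have hA := aux_key (F := F) (1/2 + c + 1/(2*q)) (-(1/2)) k a ha
  have hB := aux_key (F := F) (1/2 - c - 1/(2*q)) ((1/2)) k a ha
  have hN := aux_key (F := F) 1 0 k a ha
  rw [← hS, ← hqdef] at hA hB hN
  -- simplify hN to the cardinality
  have hNcard : q * (S.card : ℝ) = q^k := by
    have h : ∑ x ∈ S, ∏ i : Fin k, ((1:ℝ) + 0 * if x i = 0 then 1 else 0) = (S.card : ℝ) := by
      simp
    rw [h] at hN
    rw [hN, zero_pow hknz]
    ring
  have hNpos : (0:ℝ) < (S.card : ℝ) := by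
    have hqk : (0:ℝ) < q^k := pow_pos hq0 k
    nlinarith
  -- simplify hA, hB right-hand sides
  have hco : q * (1/2 + c + 1/(2*q)) + (-(1/2)) = q * (1/2 + c) := by
    field_simp
    ring
  have hco' : q * (1/2 - c - 1/(2*q)) + (1/2) = q * (1/2 - c) := by
    field_simp
    ring
  rw [hco] at hA
  rw [hco'] at hB
  have hodd : (-(1/2:ℝ))^k = -((1/2)^k) := Odd.neg_pow hk _
  rw [hodd] at hA
  rw [mul_pow] at hA hB
  have h2k : (0:ℝ) < (2*q)^k := by positivity
  have hε3 : ε * (2*q)^k = q - 1 := by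
    rw [hεdef]; exact div_mul_cancel₀ _ h2k.ne'
  have h12 : ((1:ℝ)/2)^k * 2^k = 1 := by
    rw [← mul_pow]; norm_num
  -- division values
  have hAN : (∑ x ∈ S, ∏ i : Fin k,
        ((1/2 + c + 1/(2*q)) + (-(1/2:ℝ)) * if x i = 0 then 1 else 0)) / (S.card : ℝ)
      = (1/2+c)^k - ε := by
    rw [div_eq_iff hNpos.ne']
    apply mul_left_cancel₀ hq0.ne'
    rw [hA, show q * (((1/2+c)^k - ε) * (S.card:ℝ)) = ((1/2+c)^k - ε) * (q * (S.card:ℝ)) by ring,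
      hNcard]
    linear_combination ((1:ℝ)/2)^k * hε3 - (ε * q^k) * h12
  have hBN : (∑ x ∈ S, ∏ i : Fin k,
        ((1/2 - c - 1/(2*q)) + ((1/2:ℝ)) * if x i = 0 then 1 else 0)) / (S.card : ℝ)
      = (1/2-c)^k + ε := by
    rw [div_eq_iff hNpos.ne']
    apply mul_left_cancel₀ hq0.ne'
    rw [hB, show q * (((1/2-c)^k + ε) * (S.card:ℝ)) = ((1/2-c)^k + ε) * (q * (S.card:ℝ)) by ring,
      hNcard]
    linear_combination (ε * q^k) * h12 - ((1:ℝ)/2)^k * hε3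
  -- rewrite the (1 - f) product into key shape
  have hBshape : (∑ x ∈ S, ∏ i : Fin k,
        (1 - ((1/2 + c + 1/(2*q)) + (-(1/2:ℝ)) * if x i = 0 then 1 else 0)))
      = ∑ x ∈ S, ∏ i : Fin k,
        ((1/2 - c - 1/(2*q)) + ((1/2:ℝ)) * if x i = 0 then 1 else 0) := by
    refine Finset.sum_congr rfl fun x _ => Finset.prod_congr rfl fun i _ => ?_
    split_ifs <;> ring
  -- averages
  have hsumf : (∑ x : F, ((1/2 + c + 1/(2*q)) + (-(1/2:ℝ)) * if x = 0 then 1 else 0))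
      = q * (1/2 + c) := by
    rw [Finset.sum_add_distrib, Finset.sum_const, ← Finset.mul_sum,
      Finset.sum_ite_eq' Finset.univ (0:F) (fun _ => (1:ℝ))]
    simp only [Finset.mem_univ, if_true, Finset.card_univ, nsmul_eq_mul]
    rw [← hqdef]
    linear_combination hco
  have hsumg : (∑ x : F, (1 - ((1/2 + c + 1/(2*q)) + (-(1/2:ℝ)) * if x = 0 then 1 else 0)))
      = q * (1/2 - c) := by
    rw [Finset.sum_sub_distrib, hsumf, Finset.sum_const]
    simp only [Finset.card_univ, nsmul_eq_mul, mul_one]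
    rw [← hqdef]
    ring
  rw [hBshape, hsumf, hsumg, hAN, hBN,
    mul_div_cancel_left₀ _ hq0.ne', mul_div_cancel_left₀ _ hq0.ne']
  -- right-hand side
  have hRHS : (2:ℝ) ^ ((1:ℤ) - k - (m+1:ℕ)) = 2 * (1/2:ℝ)^(k+(m+1)) := by
    rw [show ((1:ℤ) - k - (m+1:ℕ)) = 1 - ((k+(m+1):ℕ):ℤ) by push_cast; ring]
    rw [zpow_sub₀ (by norm_num : (2:ℝ) ≠ 0), zpow_natCast, zpow_one]
    rw [one_div, inv_pow]
    ring
  rw [hRHS]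
  -- final inequality
  have hP := aux_Pb c hc0.le (by linarith) (k+(m+1))
  have hl := aux_low c hc0.le hc14 m
  have hεl := mul_le_mul_of_nonneg_left hl hε.le
  have h4m : (4:ℝ)^m * (1/4)^m = 1 := by
    rw [← mul_pow]; norm_num
  have hnum : 4*((k:ℝ)+(m+1))*c^2 < ε * (2*c*(1/4)^m) := by
    have heq : ε * (2*c*(1/4)^m) = 32 * (K * c^2) := by
      rw [← hcs]
      linear_combination (32*K*c^2) * h4m
    rw [heq, hKdef]
    have hKc : 0 < K * c^2 := mul_pos hK (pow_pos hc0 2)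
    rw [← hKdef]
    nlinarith [hKc]
  have e1 : (1/2+c:ℝ)^k * (1/2+c)^(m+1) = (1/2+c)^(k+(m+1)) := (pow_add _ k (m+1)).symm
  have e2 : (1/2-c:ℝ)^k * (1/2-c)^(m+1) = (1/2-c)^(k+(m+1)) := (pow_add _ k (m+1)).symm
  push_cast at hP
  calc (1/2+c)^(m+1) * ((1/2+c)^k - ε) + (1/2-c)^(m+1) * ((1/2-c)^k + ε)
      = ((1/2+c:ℝ)^(k+(m+1)) + (1/2-c)^(k+(m+1)))
          - ε*((1/2+c)^(m+1) - (1/2-c)^(m+1)) := by linear_combination e1 + e2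
    _ ≤ (2*(1/2:ℝ)^(k+(m+1)) + 4*((k:ℝ)+(m+1))*c^2) - ε*(2*c*(1/4)^m) := by
        linarith [hP, hεl]
    _ < 2*(1/2:ℝ)^(k+(m+1)) := by linarith [hnum]
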